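/- Let A = [0,R]² ⊂ ℝ² be the square of side R > 0, and let γ : [0,∞) → ℝ be a bounded measurable function. Then (1/|A|²)·∫_{A×A} γ(‖s − t‖) ds dt = ∫_0^{√2·R} γ(h)·f_square(h,R) dh, where ‖·‖ is the Euclidean norm. Equivalently, if S and T are independent random variables uniformly distributed on A, then E[γ(‖S−T‖)] = ∫_0^{√2·R} γ(h)·f_square(h,R) dh. -/

import Mathlib

open MeasureTheory

/-- Density of the distance between two independent uniform points in a square
of side `R`. -/
noncomputable def fsquare (h R : ℝ) : ℝ :=
  if h ≤ R then
    2 * Real.pi * h / R ^ 2 - 8 * h ^ 2 / R ^ 3 + 2 * h ^ 3 / R ^ 4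
  else
    (2 * h / R ^ 2) *
      (-2 - h ^ 2 / R ^ 2 + 3 * Real.sqrt (h ^ 2 / R ^ 2 - 1)
        + (h ^ 2 / R ^ 2 + 1) / Real.sqrt (h ^ 2 / R ^ 2 - 1)
        + 2 * Real.arcsin ((2 - h ^ 2 / R ^ 2) / (h ^ 2 / R ^ 2))
        - 4 / ((h ^ 2 / R ^ 2) *
            Real.sqrt (1 - (2 - h ^ 2 / R ^ 2) ^ 2 / (h ^ 2 / R ^ 2) ^ 2)))

/-- The square `[0,R]² ⊂ ℝ²`. -/
def squareRegion (R : ℝ) : Set (EuclideanSpace ℝ (Fin 2)) :=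
  {x | x 0 ∈ Set.Icc 0 R ∧ x 1 ∈ Set.Icc 0 R}

namespace SQ
open Set Real

noncomputable def w (R x : ℝ) : ℝ := max (R - |x|) 0
def Q (R : ℝ) : Set (ℝ × ℝ) := Icc 0 R ×ˢ Icc 0 R
noncomputable def n (u : ℝ × ℝ) : ℝ := Real.sqrt (u.1 ^ 2 + u.2 ^ 2)
noncomputable def J (R r : ℝ) : ℝ := ∫ θ in Ioo (-π) π, w R (r * cos θ) * w R (r * sin θ)

lemma w_meas (R : ℝ) : Measurable (w R) := by unfold w; fun_prop
lemma w_cont (R : ℝ) : Continuous (w R) := by unfold w; fun_prop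
lemma n_nonneg (u : ℝ × ℝ) : 0 ≤ n u := Real.sqrt_nonneg _
lemma n_meas : Measurable n := by unfold n; fun_prop
lemma Q_meas (R : ℝ) : MeasurableSet (Q R) := measurableSet_Icc.prod measurableSet_Icc
lemma w_nonneg (R x : ℝ) : 0 ≤ w R x := le_max_right _ _
lemma w_le {R : ℝ} (hR : 0 ≤ R) (x : ℝ) : w R x ≤ R := by
  unfold w
  rcases le_total (R - |x|) 0 with h | h
  · rw [max_eq_right h]; exact hR
  · rw [max_eq_left h]; nlinarith [abs_nonneg x]
lemma w_even (R x : ℝ) : w R (-x) = w R x := by simp [w]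
lemma w_eq_zero {R x : ℝ} (h : R ≤ |x|) : w R x = 0 := max_eq_right (by linarith)
lemma w_eq {R x : ℝ} (h : |x| ≤ R) : w R x = R - |x| := max_eq_left (by linarith)

lemma ind_mul {α : Type*} (s : Set α) (f : α → ℝ) (x : α) :
    s.indicator f x = s.indicator 1 x * f x := by
  by_cases h : x ∈ s
  · rw [indicator_of_mem h, indicator_of_mem h]; simp
  · rw [indicator_of_notMem h, indicator_of_notMem h]; simp

lemma Qind (R : ℝ) (p : ℝ × ℝ) :
    (Q R).indicator (1 : ℝ × ℝ → ℝ) p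
      = (Icc 0 R).indicator 1 p.1 * (Icc 0 R).indicator 1 p.2 := by
  by_cases h : p ∈ Q R
  · rw [indicator_of_mem h, indicator_of_mem h.1, indicator_of_mem h.2]; simp
  · rw [indicator_of_notMem h]
    rcases not_and_or.1 h with h | h
    · rw [indicator_of_notMem h]; simp
    · rw [indicator_of_notMem h]; simp

lemma oneD (R : ℝ) (a : ℝ) :
    ∫ x : ℝ, (Icc 0 R).indicator 1 x * (Icc 0 R).indicator 1 (x - a) = w R a := by
  have h1 : ∀ x : ℝ, (Icc 0 R).indicator (1 : ℝ → ℝ) x * (Icc 0 R).indicator 1 (x - a)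
      = (Icc (max 0 a) (min R (R + a))).indicator 1 x := by
    intro x
    have h2 : (Icc 0 R).indicator (1 : ℝ → ℝ) (x - a) = (Icc a (R + a)).indicator 1 x := by
      by_cases h : x - a ∈ Icc (0:ℝ) R
      · rw [indicator_of_mem h,
          indicator_of_mem (by simp only [mem_Icc] at h ⊢; constructor <;> linarith [h.1, h.2])]; simp
      · rw [indicator_of_notMem h, indicator_of_notMem]
        simp only [mem_Icc, not_and_or] at h ⊢
        rcases h with h | h
        · left; linarith
        · right; linarith
    rw [h2, ← Set.inter_indicator_mul, Icc_inter_Icc]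
    simp [Pi.one_def]
  simp only [h1]
  rw [integral_indicator measurableSet_Icc]
  simp only [Pi.one_apply, setIntegral_const, smul_eq_mul, mul_one]
  rw [Real.volume_real_Icc]
  have : min R (R + a) - max 0 a = R - |a| := by
    rcases le_total 0 a with h | h
    · rw [abs_of_nonneg h, max_eq_right h, min_eq_left (by linarith)]
    · rw [abs_of_nonpos h, max_eq_left h, min_eq_right (by linarith)]; ring
  rw [this]; rfl

lemma corr (R : ℝ) (v : ℝ × ℝ) :
    ∫ p : ℝ × ℝ, (Q R).indicator 1 p * (Q R).indicator 1 (p - v) = w R v.1 * w R v.2 := by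
  have h1 : ∀ p : ℝ × ℝ, (Q R).indicator (1:ℝ×ℝ→ℝ) p * (Q R).indicator 1 (p - v)
      = ((Icc 0 R).indicator 1 p.1 * (Icc 0 R).indicator 1 (p.1 - v.1))
        * ((Icc 0 R).indicator 1 p.2 * (Icc 0 R).indicator 1 (p.2 - v.2)) := by
    intro p; rw [Qind, Qind]; ring_nf; rfl
  simp only [h1]
  rw [MeasureTheory.Measure.volume_eq_prod,
    integral_prod_mul (fun x => (Icc 0 R).indicator 1 x * (Icc 0 R).indicator 1 (x - v.1))
      (fun y => (Icc 0 R).indicator 1 y * (Icc 0 R).indicator 1 (y - v.2)),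
    oneD, oneD]

lemma conv (R : ℝ) (hR : 0 < R) (γ : ℝ → ℝ) (hmeas : Measurable γ)
    (M : ℝ) (hM : ∀ h : ℝ, 0 ≤ h → |γ h| ≤ M) :
    ∫ p in Q R, ∫ q in Q R, γ (n (p - q))
      = ∫ v : ℝ × ℝ, γ (n v) * (w R v.1 * w R v.2) := by
  have hM0 : 0 ≤ M := le_trans (abs_nonneg _) (hM 0 le_rfl)
  have step1 : ∀ p : ℝ × ℝ, ∫ q in Q R, γ (n (p - q))
      = ∫ v : ℝ × ℝ, (Q R).indicator 1 (p - v) * γ (n v) := by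
    intro p
    rw [← integral_indicator (Q_meas R)]
    have : ∀ q, (Q R).indicator (fun q => γ (n (p - q))) q
        = (fun v => (Q R).indicator (1:ℝ×ℝ→ℝ) (p - v) * γ (n v)) (p - q) := by
      intro q
      rw [ind_mul]
      show _ = (Q R).indicator 1 (p - (p - q)) * γ (n (p - q))
      rw [sub_sub_cancel]
    simp only [this]
    exact integral_sub_left_eq_self (fun v => (Q R).indicator 1 (p - v) * γ (n v)) volume p
  simp only [step1]
  rw [← integral_indicator (Q_meas R)]
  have step2 : ∀ p, (Q R).indicator
        (fun p => ∫ v : ℝ × ℝ, (Q R).indicator 1 (p - v) * γ (n v)) p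
      = ∫ v : ℝ × ℝ, (Q R).indicator 1 p * ((Q R).indicator 1 (p - v) * γ (n v)) := by
    intro p
    rw [ind_mul, ← integral_const_mul]
  simp only [step2]
  have hint : Integrable (Function.uncurry fun p v : ℝ × ℝ =>
      (Q R).indicator 1 p * ((Q R).indicator 1 (p - v) * γ (n v)))
      (volume.prod volume) := by
    set B : Set (ℝ × ℝ) := Icc (-R) R ×ˢ Icc (-R) R with hB
    have hBm : MeasurableSet B := measurableSet_Icc.prod measurableSet_Icc
    have hSm : MeasurableSet (Q R ×ˢ B) := (Q_meas R).prod hBm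
    apply Integrable.mono' (g := (Q R ×ˢ B).indicator fun _ => M)
    · rw [integrable_indicator_iff hSm]
      refine integrableOn_const ?_
      rw [MeasureTheory.Measure.volume_eq_prod, Measure.prod_prod]
      have h1 : volume (Q R) < ⊤ := by
        rw [Q, MeasureTheory.Measure.volume_eq_prod, Measure.prod_prod, Real.volume_Icc]
        exact ENNReal.mul_lt_top ENNReal.ofReal_lt_top ENNReal.ofReal_lt_top
      have h2 : volume B < ⊤ := by
        rw [hB, MeasureTheory.Measure.volume_eq_prod, Measure.prod_prod, Real.volume_Icc]
        exact ENNReal.mul_lt_top ENNReal.ofReal_lt_top ENNReal.ofReal_lt_top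
      exact (ENNReal.mul_lt_top h1 h2).ne
    · apply Measurable.aestronglyMeasurable
      apply Measurable.mul
      · exact (measurable_one.indicator (Q_meas R)).comp measurable_fst
      · apply Measurable.mul
        · exact (measurable_one.indicator (Q_meas R)).comp (measurable_fst.sub measurable_snd)
        · exact (hmeas.comp n_meas).comp measurable_snd
    · apply ae_of_all
      rintro ⟨p, v⟩
      simp only [Function.uncurry]
      by_cases h1 : p ∈ Q R
      · by_cases h2 : p - v ∈ Q R
        · obtain ⟨hp1, hp2⟩ := h1
          obtain ⟨hq1, hq2⟩ := h2
          simp only [mem_Icc] at hp1 hp2 hq1 hq2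
          simp only [Prod.fst_sub, Prod.snd_sub] at hq1 hq2
          have hmem : (p, v) ∈ Q R ×ˢ B := by
            refine ⟨⟨mem_Icc.2 hp1, mem_Icc.2 hp2⟩, ?_, ?_⟩
            · exact mem_Icc.2 ⟨by linarith [hp1.1, hp1.2, hq1.1, hq1.2],
                by linarith [hp1.1, hp1.2, hq1.1, hq1.2]⟩
            · exact mem_Icc.2 ⟨by linarith [hp2.1, hp2.2, hq2.1, hq2.2],
                by linarith [hp2.1, hp2.2, hq2.1, hq2.2]⟩
          have h1' : p ∈ Q R := ⟨mem_Icc.2 hp1, mem_Icc.2 hp2⟩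
          have h2' : p - v ∈ Q R := by
            constructor <;> simp only [Prod.fst_sub, Prod.snd_sub, mem_Icc] <;>
              exact ⟨by linarith [hq1.1, hq2.1], by linarith [hq1.2, hq2.2]⟩
          rw [indicator_of_mem h1', indicator_of_mem h2', indicator_of_mem hmem]
          simpa using hM (n v) (n_nonneg v)
        · rw [indicator_of_notMem h2]
          simp only [mul_zero, zero_mul, norm_zero]
          exact indicator_nonneg (fun _ _ => hM0) _
      · rw [indicator_of_notMem h1]
        simp only [zero_mul, norm_zero]
        exact indicator_nonneg (fun _ _ => hM0) _
  rw [integral_integral_swap hint]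
  have final : ∀ v : ℝ × ℝ, ∫ p : ℝ × ℝ,
      (Q R).indicator 1 p * ((Q R).indicator 1 (p - v) * γ (n v))
      = γ (n v) * (w R v.1 * w R v.2) := by
    intro v
    simp only [← mul_assoc]
    rw [integral_mul_const, corr, mul_comm, mul_assoc]
  simp only [final]

lemma zkey {R r : ℝ} (hR : 0 < R) (hr : Real.sqrt 2 * R < r) (θ : ℝ) :
    w R (r * cos θ) * w R (r * sin θ) = 0 := by
  have hr0 : 0 < r := lt_trans (by positivity) hr
  have h2 : 2 * R ^ 2 < r ^ 2 := by
    have e : (Real.sqrt 2 * R) ^ 2 = 2 * R ^ 2 := by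
      rw [mul_pow, Real.sq_sqrt (by norm_num : (0:ℝ) ≤ 2)]
    calc 2 * R ^ 2 = (Real.sqrt 2 * R) ^ 2 := e.symm
      _ < r ^ 2 := by
          apply pow_lt_pow_left₀ hr (by positivity) (by norm_num)
  have hpyth := sin_sq_add_cos_sq θ
  rcases le_total (sin θ ^ 2) (cos θ ^ 2) with h | h
  · have hc : 1 / 2 ≤ cos θ ^ 2 := by linarith
    have hx : 0 ≤ r * |cos θ| := mul_nonneg hr0.le (abs_nonneg _)
    have h3 : R ^ 2 < (r * |cos θ|) ^ 2 := by
      rw [mul_pow, sq_abs]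
      nlinarith [mul_le_mul_of_nonneg_left hc (sq_nonneg r)]
    have : R ≤ |r * cos θ| := by
      rw [abs_mul, abs_of_pos hr0]
      exact (lt_of_pow_lt_pow_left₀ 2 hx h3).le
    rw [w_eq_zero this, zero_mul]
  · have hc : 1 / 2 ≤ sin θ ^ 2 := by linarith
    have hx : 0 ≤ r * |sin θ| := mul_nonneg hr0.le (abs_nonneg _)
    have h3 : R ^ 2 < (r * |sin θ|) ^ 2 := by
      rw [mul_pow, sq_abs]
      nlinarith [mul_le_mul_of_nonneg_left hc (sq_nonneg r)]
    have : R ≤ |r * sin θ| := by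
      rw [abs_mul, abs_of_pos hr0]
      exact (lt_of_pow_lt_pow_left₀ 2 hx h3).le
    rw [w_eq_zero this, mul_zero]

lemma polar (R : ℝ) (hR : 0 < R) (γ : ℝ → ℝ) (hmeas : Measurable γ)
    (M : ℝ) (hM : ∀ h : ℝ, 0 ≤ h → |γ h| ≤ M) :
    ∫ v : ℝ × ℝ, γ (n v) * (w R v.1 * w R v.2)
      = ∫ r in Ioi (0:ℝ), γ r * (r * J R r) := by
  have hM0 : 0 ≤ M := le_trans (abs_nonneg _) (hM 0 le_rfl)
  rw [← integral_comp_polarCoord_symm (fun v => γ (n v) * (w R v.1 * w R v.2))]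
  have hTm : MeasurableSet polarCoord.target := by
    rw [polarCoord_target]; exact measurableSet_Ioi.prod measurableSet_Ioo
  set G : ℝ × ℝ → ℝ :=
    fun z => z.1 * (γ z.1 * (w R (z.1 * cos z.2) * w R (z.1 * sin z.2))) with hG
  have hcongr : ∀ z ∈ polarCoord.target,
      z.1 • ((fun v => γ (n v) * (w R v.1 * w R v.2)) (polarCoord.symm z)) = G z := by
    intro z hz
    rw [polarCoord_target] at hz
    have hz1 : 0 < z.1 := hz.1
    rw [polarCoord_symm_apply]
    have : n (z.1 * cos z.2, z.1 * sin z.2) = z.1 := by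
      unfold n
      simp only
      rw [show (z.1 * cos z.2) ^ 2 + (z.1 * sin z.2) ^ 2 = z.1 ^ 2 by
        nlinarith [sin_sq_add_cos_sq z.2]]
      exact Real.sqrt_sq hz1.le
    rw [smul_eq_mul]
    simp only [this, hG]
  rw [setIntegral_congr_fun hTm hcongr]
  have hGm : Measurable G := by
    apply measurable_fst.mul
    apply (hmeas.comp measurable_fst).mul
    apply Measurable.mul
    · exact (w_meas R).comp (measurable_fst.mul (Real.measurable_cos.comp measurable_snd))
    · exact (w_meas R).comp (measurable_fst.mul (Real.measurable_sin.comp measurable_snd))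
  have hGint : IntegrableOn G polarCoord.target := by
    set D : Set (ℝ × ℝ) := Ioc 0 (Real.sqrt 2 * R) ×ˢ Ioo (-π) π with hD
    have hDm : MeasurableSet D := measurableSet_Ioc.prod measurableSet_Ioo
    apply Integrable.mono' (g := D.indicator fun _ => Real.sqrt 2 * R * (M * R ^ 2))
    · apply Integrable.restrict
      rw [integrable_indicator_iff hDm]
      refine integrableOn_const ?_
      rw [hD, MeasureTheory.Measure.volume_eq_prod, Measure.prod_prod, Real.volume_Ioc,
        Real.volume_Ioo]
      exact (ENNReal.mul_lt_top ENNReal.ofReal_lt_top ENNReal.ofReal_lt_top).ne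
    · exact hGm.aestronglyMeasurable.restrict
    · rw [ae_restrict_iff' hTm]
      apply ae_of_all
      intro z hz
      rw [polarCoord_target] at hz
      obtain ⟨hz1, hz2⟩ := hz
      rcases le_or_gt z.1 (Real.sqrt 2 * R) with hle | hgt
      · have hmem : z ∈ D := ⟨⟨hz1, hle⟩, hz2⟩
        rw [indicator_of_mem hmem]
        have hw1 : w R (z.1 * cos z.2) ≤ R := w_le hR.le _
        have hw2 : w R (z.1 * sin z.2) ≤ R := w_le hR.le _
        have hww : w R (z.1 * cos z.2) * w R (z.1 * sin z.2) ≤ R ^ 2 := by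
          have := mul_le_mul hw1 hw2 (w_nonneg _ _) hR.le
          nlinarith
        have hγ : |γ z.1| ≤ M := hM z.1 (le_of_lt hz1)
        have h1 : |γ z.1| * (w R (z.1 * cos z.2) * w R (z.1 * sin z.2)) ≤ M * R ^ 2 :=
          mul_le_mul hγ hww (mul_nonneg (w_nonneg _ _) (w_nonneg _ _)) hM0
        rw [hG, Real.norm_eq_abs, abs_mul, abs_of_pos hz1, abs_mul,
          abs_of_nonneg (mul_nonneg (w_nonneg _ _) (w_nonneg _ _))]
        exact mul_le_mul hle h1
          (mul_nonneg (abs_nonneg _) (mul_nonneg (w_nonneg _ _) (w_nonneg _ _)))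
          (by positivity)
      · have : G z = 0 := by rw [hG]; simp only; rw [zkey hR hgt, mul_zero, mul_zero]
        rw [this]
        simp only [norm_zero]
        exact indicator_nonneg (fun _ _ => by positivity) _
  rw [polarCoord_target] at hGint ⊢
  rw [MeasureTheory.Measure.volume_eq_prod] at hGint ⊢
  rw [setIntegral_prod G hGint]
  apply setIntegral_congr_fun measurableSet_Ioi
  intro r hr
  simp only [hG, J]
  rw [integral_const_mul, integral_const_mul]
  ring

lemma g_cont (R r : ℝ) : Continuous (fun θ => w R (r * cos θ) * w R (r * sin θ)) := by
  apply Continuous.mul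
  · exact (w_cont R).comp (continuous_const.mul continuous_cos)
  · exact (w_cont R).comp (continuous_const.mul continuous_sin)

lemma J_eq_four (R r : ℝ) :
    J R r = 4 * ∫ θ in (0:ℝ)..(π/2), w R (r * cos θ) * w R (r * sin θ) := by
  set g : ℝ → ℝ := fun θ => w R (r * cos θ) * w R (r * sin θ) with hg
  have hc := g_cont R r
  rw [← hg] at hc
  have hpi : (0:ℝ) < π := pi_pos
  have h1 : J R r = ∫ θ in (-π)..π, g θ := by
    rw [J, intervalIntegral.integral_of_le (by linarith), integral_Ioc_eq_integral_Ioo]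
  have h2 : ∫ θ in (-π)..(0:ℝ), g θ = ∫ θ in (0:ℝ)..π, g θ := by
    have : ∀ x, g (-x) = g x := by
      intro x; rw [hg]; simp only [cos_neg, sin_neg, mul_neg, w_even]
    calc ∫ θ in (-π)..(0:ℝ), g θ = ∫ θ in -π..(-(0:ℝ)), g θ := by norm_num
      _ = ∫ θ in (0:ℝ)..π, g (-θ) := (intervalIntegral.integral_comp_neg g).symm
      _ = ∫ θ in (0:ℝ)..π, g θ := by simp only [this]
  have h3 : ∫ θ in (π/2)..π, g θ = ∫ θ in (0:ℝ)..(π/2), g θ := by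
    have : ∀ x, g (x + π/2) = g x := by
      intro x
      rw [hg]
      simp only [cos_add_pi_div_two, sin_add_pi_div_two, mul_neg, w_even]
      ring
    calc ∫ θ in (π/2)..π, g θ = ∫ θ in (0 + π/2)..(π/2 + π/2), g θ := by norm_num
      _ = ∫ θ in (0:ℝ)..(π/2), g (θ + π/2) := (intervalIntegral.integral_comp_add_right g (π/2)).symm
      _ = ∫ θ in (0:ℝ)..(π/2), g θ := by simp only [this]
  have h4 : ∫ θ in (-π)..π, g θ = (∫ θ in (-π)..(0:ℝ), g θ) + ∫ θ in (0:ℝ)..π, g θ :=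
    (intervalIntegral.integral_add_adjacent_intervals (b := 0)
      (hc.intervalIntegrable _ _) (hc.intervalIntegrable _ _)).symm
  have h5 : ∫ θ in (0:ℝ)..π, g θ = (∫ θ in (0:ℝ)..(π/2), g θ) + ∫ θ in (π/2)..π, g θ :=
    (intervalIntegral.integral_add_adjacent_intervals (b := π/2)
      (hc.intervalIntegrable _ _) (hc.intervalIntegrable _ _)).symm
  linarith [h1, h2, h3, h4, h5]

noncomputable def Phi (R r θ : ℝ) : ℝ := R^2*θ - R*r*sin θ + R*r*cos θ + r^2/2*(sin θ)^2

lemma Phi_deriv (R r θ : ℝ) :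
    HasDerivAt (Phi R r) ((R - r * cos θ) * (R - r * sin θ)) θ := by
  have h1 : HasDerivAt (fun θ : ℝ => R^2*θ) (R^2) θ := by
    simpa using (hasDerivAt_id θ).const_mul (R^2)
  have h2 : HasDerivAt (fun θ : ℝ => R*r*sin θ) (R*r*cos θ) θ :=
    (Real.hasDerivAt_sin θ).const_mul (R*r)
  have h3 : HasDerivAt (fun θ : ℝ => R*r*cos θ) (R*r*(-sin θ)) θ :=
    (Real.hasDerivAt_cos θ).const_mul (R*r)
  have h4 : HasDerivAt (fun θ : ℝ => r^2/2*(sin θ)^2) (r^2/2*(2*sin θ*cos θ)) θ := by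
    have := ((Real.hasDerivAt_sin θ).pow 2).const_mul (r^2/2)
    simpa [mul_comm, mul_assoc, mul_left_comm] using this
  have := ((h1.sub h2).add h3).add h4
  exact this.congr_deriv (by ring)

lemma ftc (R r a b : ℝ) :
    ∫ θ in a..b, (R - r * cos θ) * (R - r * sin θ) = Phi R r b - Phi R r a := by
  apply intervalIntegral.integral_eq_sub_of_hasDerivAt (fun θ _ => Phi_deriv R r θ)
  apply Continuous.intervalIntegrable
  fun_prop

lemma key1 {R r : ℝ} (hR : 0 < R) (hr : 0 < r) (hrR : r ≤ R) :
    J R r = 4 * (π*R^2/2 - 2*R*r + r^2/2) := by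
  rw [J_eq_four]
  congr 1
  have heq : EqOn (fun θ => w R (r * cos θ) * w R (r * sin θ))
      (fun θ => (R - r * cos θ) * (R - r * sin θ)) (uIcc 0 (π/2)) := by
    intro θ hθ
    rw [uIcc_of_le (by positivity)] at hθ
    obtain ⟨h0, h1⟩ := hθ
    have hcos : 0 ≤ cos θ := cos_nonneg_of_mem_Icc ⟨by linarith, h1⟩
    have hsin : 0 ≤ sin θ := sin_nonneg_of_nonneg_of_le_pi h0 (by linarith [pi_pos])
    have hc1 : cos θ ≤ 1 := cos_le_one θ
    have hs1 : sin θ ≤ 1 := sin_le_one θ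
    simp only
    rw [w_eq (by rw [abs_of_nonneg (by positivity)]; nlinarith),
        w_eq (by rw [abs_of_nonneg (by positivity)]; nlinarith),
        abs_of_nonneg (by positivity), abs_of_nonneg (by positivity)]
  rw [intervalIntegral.integral_congr heq, ftc]
  rw [Phi, Phi]
  simp [sin_pi_div_two, cos_pi_div_two]
  ring

set_option maxHeartbeats 1000000 in
lemma key2 {R r : ℝ} (hR : 0 < R) (hr1 : R < r) (hr2 : r ≤ Real.sqrt 2 * R) :
    J R r = 4 * (R^2*(arcsin (R/r) - arccos (R/r)) - R^2
      + 2*R*r*Real.sqrt (1-(R/r)^2) - r^2/2) := by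
  have hr0 : 0 < r := lt_trans hR hr1
  set x := R / r with hx
  set s := Real.sqrt (1 - x^2) with hs
  have hx0 : 0 < x := div_pos hR hr0
  have hx1 : x < 1 := (div_lt_one hr0).2 hr1
  have hx2sq : 1 / 2 ≤ x ^ 2 := by
    have hrsq : r ^ 2 ≤ 2 * R ^ 2 := by
      have e : (Real.sqrt 2 * R) ^ 2 = 2 * R ^ 2 := by
        rw [mul_pow, Real.sq_sqrt (by norm_num : (0:ℝ) ≤ 2)]
      nlinarith [hr2, hr0.le, Real.sqrt_nonneg 2, mul_nonneg (Real.sqrt_nonneg 2) hR.le]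
    rw [hx, div_pow, le_div_iff₀ (by positivity)]
    nlinarith
  have hs2 : s ^ 2 = 1 - x ^ 2 := Real.sq_sqrt (by nlinarith)
  have hs0 : 0 ≤ s := Real.sqrt_nonneg _
  set a := arccos x with ha
  set b := arcsin x with hb
  have ha0 : 0 ≤ a := arccos_nonneg x
  have hb2 : b ≤ π / 2 := arcsin_le_pi_div_two x
  have ha2 : a ≤ π / 2 := arccos_le_pi_div_two.2 hx0.le
  have hb0 : 0 ≤ b := arcsin_nonneg.2 hx0.le
  have hcosa : cos a = x := cos_arccos (by linarith) hx1.le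
  have hsina : sin a = s := sin_arccos x
  have hsinb : sin b = x := sin_arcsin (by linarith) hx1.le
  have hcosb : cos b = s := cos_arcsin x
  have hab : a ≤ b := by
    by_contra hcon
    push_neg at hcon
    have := Real.strictAntiOn_cos ⟨hb0, by linarith [pi_pos]⟩ ⟨ha0, by linarith [pi_pos]⟩ hcon
    rw [hcosa, hcosb] at this
    nlinarith
  have hpi : (0:ℝ) < π := pi_pos
  have hrx : r * x = R := by rw [hx]; field_simp
  set g : ℝ → ℝ := fun θ => w R (r * cos θ) * w R (r * sin θ) with hg
  have hc : Continuous g := g_cont R r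
  have h4 : ∫ θ in (0:ℝ)..(π/2), g θ
      = ((∫ θ in (0:ℝ)..a, g θ) + ∫ θ in a..b, g θ) + ∫ θ in b..(π/2), g θ := by
    rw [intervalIntegral.integral_add_adjacent_intervals (b := a)
      (hc.intervalIntegrable _ _) (hc.intervalIntegrable _ _),
      intervalIntegral.integral_add_adjacent_intervals (b := b)
      (hc.intervalIntegrable _ _) (hc.intervalIntegrable _ _)]
  have hz1 : ∫ θ in (0:ℝ)..a, g θ = 0 := by
    have heq : EqOn g (fun _ => (0:ℝ)) (uIcc 0 a) := by
      intro θ hθ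
      rw [uIcc_of_le ha0] at hθ
      obtain ⟨h0, h1⟩ := hθ
      have hcos : x ≤ cos θ := by
        rw [← hcosa]
        exact cos_le_cos_of_nonneg_of_le_pi h0 (by linarith) h1
      have : R ≤ |r * cos θ| := by
        rw [abs_of_nonneg (by nlinarith [hrx])]
        nlinarith [hrx]
      rw [hg]
      simp only
      rw [w_eq_zero this, zero_mul]
    rw [intervalIntegral.integral_congr heq]
    simp
  have hz2 : ∫ θ in b..(π/2), g θ = 0 := by
    have heq : EqOn g (fun _ => (0:ℝ)) (uIcc b (π/2)) := by
      intro θ hθ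
      rw [uIcc_of_le hb2] at hθ
      obtain ⟨h0, h1⟩ := hθ
      have hsin : x ≤ sin θ := by
        rw [← hsinb, ← cos_pi_div_two_sub b, ← cos_pi_div_two_sub θ]
        exact cos_le_cos_of_nonneg_of_le_pi (by linarith) (by linarith) (by linarith)
      have : R ≤ |r * sin θ| := by
        rw [abs_of_nonneg (by nlinarith [hrx])]
        nlinarith [hrx]
      rw [hg]
      simp only
      rw [w_eq_zero this, mul_zero]
    rw [intervalIntegral.integral_congr heq]
    simp
  have hmid : ∫ θ in a..b, g θ = Phi R r b - Phi R r a := by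
    have heq : EqOn g (fun θ => (R - r * cos θ) * (R - r * sin θ)) (uIcc a b) := by
      intro θ hθ
      rw [uIcc_of_le hab] at hθ
      obtain ⟨h0, h1⟩ := hθ
      have hθ0 : 0 ≤ θ := le_trans ha0 h0
      have hθ2 : θ ≤ π / 2 := le_trans h1 hb2
      have hcosn : 0 ≤ cos θ := cos_nonneg_of_mem_Icc ⟨by linarith, hθ2⟩
      have hsinn : 0 ≤ sin θ := sin_nonneg_of_nonneg_of_le_pi hθ0 (by linarith)
      have hcos : cos θ ≤ x := by
        rw [← hcosa]
        exact cos_le_cos_of_nonneg_of_le_pi ha0 (by linarith) h0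
      have hsin : sin θ ≤ x := by
        rw [← hsinb, ← cos_pi_div_two_sub b, ← cos_pi_div_two_sub θ]
        exact cos_le_cos_of_nonneg_of_le_pi (by linarith) (by linarith) (by linarith)
      rw [hg]
      simp only
      rw [w_eq (by rw [abs_of_nonneg (by positivity)]; nlinarith),
          w_eq (by rw [abs_of_nonneg (by positivity)]; nlinarith),
          abs_of_nonneg (by positivity), abs_of_nonneg (by positivity)]
    rw [intervalIntegral.integral_congr heq, ftc]
  rw [J_eq_four, h4, hz1, hz2, hmid, Phi, Phi, hsina, hsinb, hcosa, hcosb]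
  linear_combination (-2*r^2) * hs2 + (4*(r*x - R)) * hrx

lemma key3 {R r : ℝ} (hR : 0 < R) (hr : Real.sqrt 2 * R < r) : J R r = 0 := by
  rw [J]
  simp only [zkey hR hr]
  simp

noncomputable def φ : EuclideanSpace ℝ (Fin 2) ≃ᵐ ℝ × ℝ :=
  (MeasurableEquiv.toLp 2 (Fin 2 → ℝ)).symm.trans (MeasurableEquiv.finTwoArrow)

lemma φ_apply (x : EuclideanSpace ℝ (Fin 2)) : φ x = (x 0, x 1) := rfl

lemma hφ : MeasurePreserving φ volume volume :=
  (volume_preserving_finTwoArrow ℝ).comp (EuclideanSpace.volume_preserving_symm_measurableEquiv_toLp (Fin 2))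

lemma hpre (R : ℝ) : squareRegion R = ⇑φ ⁻¹' (Q R) := rfl

lemma hnorm (s t : EuclideanSpace ℝ (Fin 2)) : ‖s - t‖ = n (φ s - φ t) := by
  rw [EuclideanSpace.norm_eq, Fin.sum_univ_two]
  simp only [Real.norm_eq_abs, sq_abs, n]
  rfl

end SQ

set_option maxHeartbeats 4000000 in
open SQ Set Real in
/-- For a square `A` of side `R` and a bounded measurable `γ`, the normalized double
integral of `γ(‖s - t‖)` reduces to a one-dimensional integral against `fsquare`. -/
theorem stmt_8 (R : ℝ) (hR : 0 < R) (γ : ℝ → ℝ)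
    (hmeas : Measurable γ) (hbdd : ∃ M, ∀ h : ℝ, 0 ≤ h → |γ h| ≤ M) :
    ((volume (squareRegion R)).toReal ^ 2)⁻¹ *
        (∫ s in squareRegion R, ∫ t in squareRegion R, γ ‖s - t‖)
      = ∫ h in Set.Icc 0 (Real.sqrt 2 * R), γ h * fsquare h R := by
  obtain ⟨M, hM⟩ := hbdd
  -- volume of the square
  have hvol : (volume (squareRegion R)).toReal = R ^ 2 := by
    rw [hpre R, hφ.measure_preimage (Q_meas R).nullMeasurableSet]
    rw [Q, MeasureTheory.Measure.volume_eq_prod, Measure.prod_prod, Real.volume_Icc,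
      ENNReal.toReal_mul, sub_zero, ENNReal.toReal_ofReal hR.le]
    ring
  -- transfer to ℝ × ℝ
  have htrans : ∫ s in squareRegion R, ∫ t in squareRegion R, γ ‖s - t‖
      = ∫ p in Q R, ∫ q in Q R, γ (n (p - q)) := by
    have hinner : ∀ s : EuclideanSpace ℝ (Fin 2),
        ∫ t in squareRegion R, γ ‖s - t‖ = ∫ q in Q R, γ (n (φ s - q)) := by
      intro s
      rw [hpre R]
      have : ∀ t : EuclideanSpace ℝ (Fin 2), γ ‖s - t‖ = γ (n (φ s - φ t)) := by
        intro t; rw [hnorm]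
      simp only [this]
      exact hφ.setIntegral_preimage_emb φ.measurableEmbedding
        (fun q => γ (n (φ s - q))) (Q R)
    simp only [hinner]
    rw [hpre R]
    exact hφ.setIntegral_preimage_emb φ.measurableEmbedding
      (fun p => ∫ q in Q R, γ (n (p - q))) (Q R)
  rw [hvol, htrans, conv R hR γ hmeas M hM, polar R hR γ hmeas M hM]
  -- pointwise identification with fsquare
  rw [← integral_const_mul]
  have hpt : ∀ r ∈ Ioi (0:ℝ), ((R ^ 2) ^ 2)⁻¹ * (γ r * (r * J R r))
      = (Ioc 0 (Real.sqrt 2 * R)).indicator (fun h => γ h * fsquare h R) r := by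
    intro r hr
    rw [mem_Ioi] at hr
    rcases le_or_gt r (Real.sqrt 2 * R) with hle | hgt
    · rw [indicator_of_mem (show r ∈ Ioc 0 (Real.sqrt 2 * R) from ⟨hr, hle⟩)]
      rcases le_or_gt r R with hrR | hrR
      · rw [key1 hR hr hrR, fsquare, if_pos hrR]
        field_simp
        ring
      · rw [key2 hR hrR hle, fsquare, if_neg (not_le.2 hrR)]
        -- algebraic identities
        have hr0 : 0 < r := hr
        set x := R / r with hxdef
        set s := Real.sqrt (1 - x ^ 2) with hsdef
        have hx0 : 0 < x := div_pos hR hr0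
        have hx1 : x < 1 := (div_lt_one hr0).2 hrR
        have hs2 : s ^ 2 = 1 - x ^ 2 := Real.sq_sqrt (by nlinarith)
        have hs0 : 0 < s := Real.sqrt_pos.2 (by nlinarith)
        have hT0 : 0 < r * s / R := by positivity
        have hrx : r * x = R := by rw [hxdef]; field_simp
        have h1 : r ^ 2 * s ^ 2 = r ^ 2 - R ^ 2 := by
          have h2 : (r * x) ^ 2 = R ^ 2 := by rw [hrx]
          calc r ^ 2 * s ^ 2 = r ^ 2 * (1 - x ^ 2) := by rw [hs2]
            _ = r ^ 2 - (r * x) ^ 2 := by ring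
            _ = r ^ 2 - R ^ 2 := by rw [h2]
        have hbm1 : r ^ 2 / R ^ 2 - 1 = (r * s / R) ^ 2 := by
          field_simp
          linear_combination -h1
        have hsq1 : Real.sqrt (r ^ 2 / R ^ 2 - 1) = r * s / R := by
          rw [hbm1]; exact Real.sqrt_sq hT0.le
        have hb0 : (0:ℝ) < r ^ 2 / R ^ 2 := by positivity
        have hinner : 1 - (2 - r ^ 2 / R ^ 2) ^ 2 / (r ^ 2 / R ^ 2) ^ 2
            = (2 * (r * s / R) / (r ^ 2 / R ^ 2)) ^ 2 := by
          field_simp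
          linear_combination (-4 * R ^ 2) * h1
        have hsq2 : Real.sqrt (1 - (2 - r ^ 2 / R ^ 2) ^ 2 / (r ^ 2 / R ^ 2) ^ 2)
            = 2 * (r * s / R) / (r ^ 2 / R ^ 2) := by
          rw [hinner]; exact Real.sqrt_sq (by positivity)
        have harg : (2 - r ^ 2 / R ^ 2) / (r ^ 2 / R ^ 2) = 2 * x ^ 2 - 1 := by
          rw [hxdef]; field_simp
        have hA0 : 0 ≤ arcsin x := arcsin_nonneg.2 hx0.le
        have hA2 : arcsin x ≤ π / 2 := arcsin_le_pi_div_two x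
        have harcsin : arcsin ((2 - r ^ 2 / R ^ 2) / (r ^ 2 / R ^ 2))
            = 2 * arcsin x - π / 2 := by
          rw [harg]
          have hsin : sin (2 * arcsin x - π / 2) = 2 * x ^ 2 - 1 := by
            rw [sin_sub, sin_pi_div_two, cos_pi_div_two, cos_two_mul', cos_arcsin,
              sin_arcsin (by linarith) hx1.le, Real.sq_sqrt (by nlinarith : (0:ℝ) ≤ 1 - x ^ 2)]
            ring
          rw [← hsin, arcsin_sin (by linarith) (by linarith)]
        have harccos : arccos x = π / 2 - arcsin x := arccos_eq_pi_div_two_sub_arcsin x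
        rw [hsq1, hsq2, harcsin, harccos]
        have hdiv1 : (r ^ 2 / R ^ 2 + 1) / (r * s / R) = r * s / R + 2 / (r * s / R) := by
          rw [show r ^ 2 / R ^ 2 + 1 = (r * s / R) ^ 2 + 2 by linear_combination hbm1]
          field_simp
        have hdiv2 : 4 / (r ^ 2 / R ^ 2 * (2 * (r * s / R) / (r ^ 2 / R ^ 2)))
            = 2 / (r * s / R) := by
          have e : r ^ 2 / R ^ 2 * (2 * (r * s / R) / (r ^ 2 / R ^ 2)) = 2 * (r * s / R) := by
            field_simp
          rw [e, show (4:ℝ) = 2 * 2 by norm_num, mul_div_mul_left _ _ (two_ne_zero)]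
        rw [hdiv1, hdiv2]
        field_simp
        ring
    · rw [indicator_of_notMem (by simp [hgt.not_ge]), key3 hR hgt]
      ring
  rw [setIntegral_congr_fun measurableSet_Ioi hpt,
    setIntegral_indicator measurableSet_Ioc,
    Set.inter_eq_self_of_subset_right Ioc_subset_Ioi_self,
    ← integral_Icc_eq_integral_Ioc]
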